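/- Assume: (i) F is l̲-strongly monotone with l̲ > 0, and both F and 𝐅 are l-Lipschitz with l > 0; (ii) L ∈ ℝ^{N×N} is the Laplacian of a weight-balanced digraph (L 1 = 0 and 1ᵀL = 0) and λ₂ > 0 satisfies xᵀ Sym(L) x ≥ λ₂ ‖x‖² for all x ∈ ℝ^N with 1ᵀx = 0, where Sym(L) = (L + Lᵀ)/2; (iii) z* ∈ ℝ^N and Z* = 1 (z*)ᵀ; (iv) α > (1/λ₂)(l²/l̲ + l). Then there exists ν > 0 such that for every Z ∈ ℝ^{N×N}, α ⟨Z − Z*, L (Z − Z*)⟩ + Σ_{i=1}^N (Z − Z*)_{ii} (𝐅(Z)_i − 𝐅(Z*)_i) ≥ ν ‖Z − Z*‖², where ⟨A, B⟩ = tr(AᵀB) and ‖·‖ is the Frobenius norm. (Consequently, along any trajectory of Ż = −α L Z − diag(𝐅(Z)) with equilibrium Z*, the function V = ½‖Z − Z*‖² satisfies V̇ ≤ −2νV.) -/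

import Mathlib

open scoped BigOperators

/-- Euclidean norm of a vector in `ℝ^N`. -/
noncomputable def vnorm {N : ℕ} (x : Fin N → ℝ) : ℝ := Real.sqrt (∑ i, (x i) ^ 2)

/-- Frobenius norm of a matrix in `ℝ^{N×N}`. -/
noncomputable def mnorm {N : ℕ} (A : Matrix (Fin N) (Fin N) ℝ) : ℝ :=
  Real.sqrt (∑ i, ∑ j, (A i j) ^ 2)


lemma vnorm_nonneg' {N : ℕ} (x : Fin N → ℝ) : 0 ≤ vnorm x := Real.sqrt_nonneg _
lemma mnorm_nonneg' {N : ℕ} (A : Matrix (Fin N) (Fin N) ℝ) : 0 ≤ mnorm A := Real.sqrt_nonneg _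
lemma vnorm_sq' {N : ℕ} (x : Fin N → ℝ) : vnorm x ^ 2 = ∑ i, (x i) ^ 2 :=
  Real.sq_sqrt (by positivity)
lemma mnorm_sq' {N : ℕ} (A : Matrix (Fin N) (Fin N) ℝ) : mnorm A ^ 2 = ∑ i, ∑ j, (A i j) ^ 2 :=
  Real.sq_sqrt (by positivity)

lemma cs_abs' {N : ℕ} (u v : Fin N → ℝ) : |∑ i, u i * v i| ≤ vnorm u * vnorm v := by
  have h := Finset.sum_mul_sq_le_sq_mul_sq Finset.univ u v
  have h2 : |∑ i, u i * v i| = Real.sqrt ((∑ i, u i * v i) ^ 2) := (Real.sqrt_sq_eq_abs _).symm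
  rw [h2, vnorm, vnorm, ← Real.sqrt_mul (by positivity)]
  exact Real.sqrt_le_sqrt h

lemma cs_lower' {N : ℕ} (u v : Fin N → ℝ) : -(vnorm u * vnorm v) ≤ ∑ i, u i * v i :=
  (abs_le.mp (cs_abs' u v)).1

lemma lap_col (N : ℕ) (L : Matrix (Fin N) (Fin N) ℝ)
    (hrow : ∀ i, ∑ j, L i j = 0) (hcol : ∀ j, ∑ i, L i j = 0)
    (c : ℝ) (x : Fin N → ℝ) :
    ∑ i, ∑ k, (c + x i) * (L i k * (c + x k)) = ∑ i, ∑ k, x i * ((L i k + L k i)/2) * x k := by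
  have e1 : ∑ i, ∑ k, (c + x i) * (L i k * (c + x k))
      = ∑ i, ∑ k, (c * c * L i k + c * (L i k * x k) + (x i * L i k * c) + x i * L i k * x k) := by
    apply Finset.sum_congr rfl; intro i _; apply Finset.sum_congr rfl; intro k _; ring
  have z1 : ∑ i : Fin N, ∑ k, c * c * L i k = 0 := by
    simp [← Finset.mul_sum, hrow]
  have z2 : ∑ i : Fin N, ∑ k, c * (L i k * x k) = 0 := by
    rw [Finset.sum_comm]
    have h2 : ∀ k, ∑ i, c * (L i k * x k) = c * ((∑ i, L i k) * x k) := by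
      intro k; rw [Finset.sum_mul, Finset.mul_sum]
    simp [h2, hcol]
  have z3 : ∑ i : Fin N, ∑ k, x i * L i k * c = 0 := by
    have h3 : ∀ i, ∑ k, x i * L i k * c = x i * ((∑ k, L i k) * c) := by
      intro i; rw [Finset.sum_mul, Finset.mul_sum]
      exact Finset.sum_congr rfl fun _ _ => by ring
    simp [h3, hrow]
  have hBA : ∑ i, ∑ k, x i * L k i * x k = ∑ i, ∑ k, x i * L i k * x k := by
    rw [Finset.sum_comm]; apply Finset.sum_congr rfl; intro i _
    apply Finset.sum_congr rfl; intro k _; ring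
  have e2 : ∑ i, ∑ k, x i * ((L i k + L k i)/2) * x k
      = ((∑ i, ∑ k, x i * L i k * x k) + ∑ i, ∑ k, x i * L k i * x k)/2 := by
    rw [← Finset.sum_add_distrib, Finset.sum_div]
    apply Finset.sum_congr rfl; intro i _
    rw [← Finset.sum_add_distrib, Finset.sum_div]
    apply Finset.sum_congr rfl; intro k _; ring
  rw [e1, e2, hBA]
  simp only [Finset.sum_add_distrib]
  rw [z1, z2, z3]
  ring

/-- Under the gain condition `α > (1/λ₂)(l²/l̲ + l)` there is `ν > 0` with
`α⟨Z − Z*, L(Z − Z*)⟩ + Σ_i (Z − Z*)_{ii}(𝐅(Z)_i − 𝐅(Z*)_i) ≥ ν‖Z − Z*‖²`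
for every `Z`, where `⟨·,·⟩` and `‖·‖` are the Frobenius inner product and norm. -/
theorem lyapunov_decrease
    (N : ℕ) (hN : 1 ≤ N)
    -- pseudogradient `F` and extended pseudogradient `𝐅` (row-wise evaluation)
    (F : (Fin N → ℝ) → (Fin N → ℝ)) (bF : Matrix (Fin N) (Fin N) ℝ → (Fin N → ℝ))
    (hbF : ∀ Z i, bF Z i = F (Z i) i)
    (lunder l : ℝ) (hlunder : 0 < lunder) (hl : 0 < l)
    -- (i) F is l̲-strongly monotone; F and 𝐅 are l-Lipschitz
    (hmono : ∀ x y : Fin N → ℝ,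
      lunder * (vnorm (x - y)) ^ 2 ≤ ∑ i, (F x i - F y i) * (x i - y i))
    (hFlip : ∀ x y : Fin N → ℝ, vnorm (F x - F y) ≤ l * vnorm (x - y))
    (hbFlip : ∀ Z W : Matrix (Fin N) (Fin N) ℝ,
      vnorm (bF Z - bF W) ≤ l * mnorm (Z - W))
    -- (ii) L weight-balanced: L1 = 0, 1ᵀL = 0, and the λ₂ lower bound on Sym(L)
    (L : Matrix (Fin N) (Fin N) ℝ)
    (hrow : ∀ i, ∑ j, L i j = 0) (hcol : ∀ j, ∑ i, L i j = 0)
    (lam2 : ℝ) (hlam2 : 0 < lam2)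
    (hlam2spec : ∀ x : Fin N → ℝ, (∑ i, x i) = 0 →
      lam2 * (vnorm x) ^ 2 ≤ ∑ i, ∑ j, x i * ((L i j + L j i) / 2) * x j)
    -- (iii) z* and Z* = 1 (z*)ᵀ
    (zstar : Fin N → ℝ) (Zstar : Matrix (Fin N) (Fin N) ℝ)
    (hZstar : Zstar = Matrix.of (fun _ j => zstar j))
    -- (iv) the gain condition
    (α : ℝ) (hα : α > (1 / lam2) * (l ^ 2 / lunder + l)) :
    ∃ ν > (0:ℝ), ∀ Z : Matrix (Fin N) (Fin N) ℝ,
      ν * (mnorm (Z - Zstar)) ^ 2 ≤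
        α * (∑ i, ∑ j, (Z - Zstar) i j * (∑ k, L i k * (Z - Zstar) k j)) +
          ∑ i, (Z - Zstar) i i * (bF Z i - bF Zstar i) := by
  have hNpos : (0:ℝ) < N := by exact_mod_cast Nat.lt_of_lt_of_le Nat.zero_lt_one hN
  have hNne : (N:ℝ) ≠ 0 := ne_of_gt hNpos
  rw [one_div_mul_eq_div, gt_iff_lt, div_lt_iff₀ hlam2] at hα
  -- hα : l^2/lunder + l < α * lam2
  have hdl : 0 < l ^ 2 / lunder := by positivity
  set c : ℝ := α * lam2 - l with hcdef
  have hcpos : 0 < c := by simp only [hcdef]; linarith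
  have hlc : l ^ 2 < lunder * c := by
    have h2 : l ^ 2 / lunder < c := by simp only [hcdef]; linarith
    calc l ^ 2 = lunder * (l ^ 2 / lunder) := by field_simp
    _ < lunder * c := by exact mul_lt_mul_of_pos_left h2 hlunder
  have hαpos : 0 < α := by nlinarith
  set D : ℝ := (N:ℝ) * c + lunder with hDdef
  have hDpos : 0 < D := by positivity
  set ν : ℝ := (lunder * c - l ^ 2) / D with hνdef
  have hνpos : 0 < ν := div_pos (by linarith) hDpos
  refine ⟨ν, hνpos, fun Z => ?_⟩
  set E : Matrix (Fin N) (Fin N) ℝ := Z - Zstar with hEdef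
  set y : Fin N → ℝ := fun j => (∑ i, E i j) / (N:ℝ) with hydef
  set e : Matrix (Fin N) (Fin N) ℝ := Matrix.of (fun i j => E i j - y j) with hedef
  have hEyj : ∀ i j, E i j = y j + e i j := by intro i j; simp [hedef]
  have hcsum : ∀ j, ∑ i, e i j = 0 := by
    intro j
    simp only [hedef, Matrix.of_apply, Finset.sum_sub_distrib, Finset.sum_const,
      Finset.card_univ, Fintype.card_fin, nsmul_eq_mul, hydef]
    field_simp
    ring
  set a : ℝ := vnorm y with hadef
  set b : ℝ := mnorm e with hbdef
  have ha0 : 0 ≤ a := vnorm_nonneg' y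
  have hb0 : 0 ≤ b := mnorm_nonneg' e
  -- Frobenius norm decomposition
  have hEsq : mnorm E ^ 2 = (N:ℝ) * a ^ 2 + b ^ 2 := by
    rw [mnorm_sq', hadef, vnorm_sq', hbdef, mnorm_sq']
    have e1 : ∀ i : Fin N, ∑ j, E i j ^ 2 = ∑ j, (y j ^ 2 + 2*(y j * e i j) + e i j ^ 2) := by
      intro i; apply Finset.sum_congr rfl; intro j _; rw [hEyj i j]; ring
    simp only [e1, Finset.sum_add_distrib]
    have e2 : ∑ _i : Fin N, ∑ j, y j ^ 2 = (N:ℝ) * ∑ j, y j ^ 2 := by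
      rw [Finset.sum_const, Finset.card_univ, Fintype.card_fin, nsmul_eq_mul]
    have e3 : ∑ i : Fin N, ∑ j, 2*(y j * e i j) = 0 := by
      rw [Finset.sum_comm]
      have h4 : ∀ j, ∑ i, 2*(y j * e i j) = (2 * y j) * ∑ i, e i j := by
        intro j; rw [Finset.mul_sum]
        exact Finset.sum_congr rfl fun _ _ => by ring
      simp [h4, hcsum]
    rw [e2, e3]; ring
  -- Laplacian bound
  have hLap : lam2 * b ^ 2 ≤ ∑ i, ∑ j, E i j * (∑ k, L i k * E k j) := by
    have swap1 : ∑ i, ∑ j, E i j * (∑ k, L i k * E k j)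
        = ∑ j, ∑ i, ∑ k, E i j * (L i k * E k j) := by
      rw [Finset.sum_comm]
      apply Finset.sum_congr rfl; intro j _
      apply Finset.sum_congr rfl; intro i _
      rw [Finset.mul_sum]
    rw [swap1]
    have hperj : ∀ j, lam2 * (∑ i, e i j ^ 2) ≤ ∑ i, ∑ k, E i j * (L i k * E k j) := by
      intro j
      have hq := hlam2spec (fun i => e i j) (hcsum j)
      rw [vnorm_sq'] at hq
      have heq : ∑ i, ∑ k, E i j * (L i k * E k j)
          = ∑ i, ∑ k, e i j * ((L i k + L k i)/2) * e k j := by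
        rw [← lap_col N L hrow hcol (y j) (fun i => e i j)]
        apply Finset.sum_congr rfl; intro i _; apply Finset.sum_congr rfl; intro k _
        rw [hEyj i j, hEyj k j]
      rw [heq]; exact hq
    calc lam2 * b ^ 2 = ∑ j, lam2 * (∑ i, e i j ^ 2) := by
          rw [← Finset.mul_sum, hbdef, mnorm_sq', Finset.sum_comm]
      _ ≤ _ := Finset.sum_le_sum fun j _ => hperj j
  -- the F-terms
  set w : Fin N → ℝ := fun j => zstar j + y j with hwdef
  set Y : Matrix (Fin N) (Fin N) ℝ := Matrix.of (fun _ j => w j) with hYdef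
  have hwz : w - zstar = y := by funext j; simp [hwdef]
  have hvwz : vnorm (w - zstar) = a := by rw [hwz]
  have hbFY : ∀ i, bF Y i = F w i := by
    intro i; rw [hbF]; congr 1
  have hbFZstar : ∀ i, bF Zstar i = F zstar i := by
    intro i; rw [hbF, hZstar]; congr 1
  have hZY : Z - Y = e := by
    ext i j
    have : E i j = Z i j - Zstar i j := rfl
    simp [hYdef, hedef, hwdef, hZstar, hEdef]
    ring
  -- T1 : strong monotonicity
  have hT1 : lunder * a ^ 2 ≤ ∑ i, (F w i - F zstar i) * y i := by
    have h := hmono w zstar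
    rw [hvwz] at h
    have hwi : ∀ i, w i - zstar i = y i := by
      intro i; rw [hwdef]; ring
    calc lunder * a ^ 2 ≤ ∑ i, (F w i - F zstar i) * (w i - zstar i) := h
      _ = ∑ i, (F w i - F zstar i) * y i := by
          apply Finset.sum_congr rfl; intro i _; rw [hwi i]
  -- T2
  have hT2 : -(a * (l * b)) ≤ ∑ i, y i * (bF Z i - bF Y i) := by
    have hv : vnorm (bF Z - bF Y) ≤ l * b := by
      have := hbFlip Z Y; rwa [hZY] at this
    have hlow := cs_lower' y (bF Z - bF Y)
    have : a * vnorm (bF Z - bF Y) ≤ a * (l * b) :=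
      mul_le_mul_of_nonneg_left hv ha0
    calc -(a * (l * b)) ≤ -(a * vnorm (bF Z - bF Y)) := by linarith
      _ ≤ ∑ i, y i * (bF Z - bF Y) i := hlow
      _ = ∑ i, y i * (bF Z i - bF Y i) := by
          apply Finset.sum_congr rfl; intro i _; rw [Pi.sub_apply]
  -- diagonal of e
  have hdiag : vnorm (fun i => e i i) ≤ b := by
    rw [hbdef, vnorm, mnorm]
    apply Real.sqrt_le_sqrt
    apply Finset.sum_le_sum
    intro i _
    exact Finset.single_le_sum (fun j _ => sq_nonneg (e i j)) (Finset.mem_univ i)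
  -- T3a
  have hT3a : -(b * (l * b)) ≤ ∑ i, e i i * (bF Z i - bF Y i) := by
    have hv : vnorm (bF Z - bF Y) ≤ l * b := by
      have := hbFlip Z Y; rwa [hZY] at this
    have hlow := cs_lower' (fun i => e i i) (bF Z - bF Y)
    have hmul : vnorm (fun i => e i i) * vnorm (bF Z - bF Y) ≤ b * (l * b) :=
      mul_le_mul hdiag hv (vnorm_nonneg' _) hb0
    calc -(b * (l * b)) ≤ -(vnorm (fun i => e i i) * vnorm (bF Z - bF Y)) := by linarith
      _ ≤ ∑ i, e i i * (bF Z - bF Y) i := hlow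
      _ = ∑ i, e i i * (bF Z i - bF Y i) := by
          apply Finset.sum_congr rfl; intro i _; rw [Pi.sub_apply]
  -- T3b
  have hT3b : -(b * (l * a)) ≤ ∑ i, e i i * (F w i - F zstar i) := by
    have hv : vnorm (F w - F zstar) ≤ l * a := by
      have := hFlip w zstar; rwa [hvwz] at this
    have hlow := cs_lower' (fun i => e i i) (F w - F zstar)
    have hmul : vnorm (fun i => e i i) * vnorm (F w - F zstar) ≤ b * (l * a) :=
      mul_le_mul hdiag hv (vnorm_nonneg' _) hb0
    calc -(b * (l * a)) ≤ -(vnorm (fun i => e i i) * vnorm (F w - F zstar)) := by linarith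
      _ ≤ ∑ i, e i i * (F w - F zstar) i := hlow
      _ = ∑ i, e i i * (F w i - F zstar i) := by
          apply Finset.sum_congr rfl; intro i _; rw [Pi.sub_apply]
  -- decomposition of the F-sum
  have hsum : ∑ i, E i i * (bF Z i - bF Zstar i)
      = (∑ i, (F w i - F zstar i) * y i) + (∑ i, y i * (bF Z i - bF Y i))
        + (∑ i, e i i * (bF Z i - bF Y i)) + (∑ i, e i i * (F w i - F zstar i)) := by
    rw [← Finset.sum_add_distrib, ← Finset.sum_add_distrib, ← Finset.sum_add_distrib]
    apply Finset.sum_congr rfl; intro i _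
    rw [hEyj i i, hbFY i, hbFZstar i]
    ring
  -- key quadratic inequality
  have key : ν * ((N:ℝ) * a ^ 2 + b ^ 2) ≤ lunder * a ^ 2 - 2 * l * (a * b) + c * b ^ 2 := by
    rw [hνdef, div_mul_eq_mul_div, div_le_iff₀ hDpos, hDdef]
    nlinarith [sq_nonneg (lunder * a - l * b), mul_nonneg (le_of_lt hNpos) (sq_nonneg (l * a - c * b))]
  have hLap' : α * (lam2 * b ^ 2) ≤ α * (∑ i, ∑ j, E i j * (∑ k, L i k * E k j)) :=
    mul_le_mul_of_nonneg_left hLap (le_of_lt hαpos)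
  rw [hEsq, hsum]
  have hc2 : α * (lam2 * b ^ 2) = c * b ^ 2 + l * b ^ 2 := by rw [hcdef]; ring
  linarith
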